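/- arXiv:1204.2176 — 2 statements merged into one kernel-verified Lean document; each statement's English description precedes it below -/
import Mathlib

section
/- For all θ, ω, x ∈ ℝ one has S(−θ, −ω, x) = exp(−4πω)·S(θ, ω, x) and Z(−ω, x) = exp(−4πω)·Z(ω, x). Consequently the stationary density satisfies the even symmetry q(−θ, −ω) = q(θ, ω) for all θ ∈ ℝ and ω ∈ {−ω₀, ω₀}, and its θ-derivative is odd: ∂θq(−θ, −ω) = −∂θq(θ, ω). -/
noncomputable section

open MeasureTheory

/-- `G u ω x = x·cos u + 2ωu`. -/
def G (u ω x : ℝ) : ℝ := x * Real.cos u + 2 * ω * u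

/-- The unnormalized stationary profile `S(θ, ω, x)`. -/
def S (θ ω x : ℝ) : ℝ :=
  Real.exp (G θ ω x) *
    ((1 - Real.exp (4 * Real.pi * ω)) * (∫ u in (0:ℝ)..θ, Real.exp (-(G u ω x))) +
      Real.exp (4 * Real.pi * ω) * (∫ u in (0:ℝ)..(2 * Real.pi), Real.exp (-(G u ω x))))

/-- The normalization constant `Z(ω, x)`. -/
def Z (ω x : ℝ) : ℝ := ∫ θ in (0:ℝ)..(2 * Real.pi), S θ ω x

/-- `Ψ_μ` for the binary disorder law `μ = (1/2)(δ_{-ω₀} + δ_{ω₀})`. -/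
def psiMu (ω₀ x : ℝ) : ℝ :=
  (1 / 2) * ((∫ θ in (0:ℝ)..(2 * Real.pi), Real.cos θ * S θ (-ω₀) x) / Z (-ω₀) x +
    (∫ θ in (0:ℝ)..(2 * Real.pi), Real.cos θ * S θ ω₀ x) / Z ω₀ x)

/-- The stationary density `q(θ, ω) = S(θ, ω, 2Kr)/Z(ω, 2Kr)`. -/
def q (K r θ ω : ℝ) : ℝ := S θ ω (2 * K * r) / Z ω (2 * K * r)

/-- `κ(ω) = (1 − exp(4πω))/(2 Z(ω, 2Kr))`. -/
def kap (K r ω : ℝ) : ℝ := (1 - Real.exp (4 * Real.pi * ω)) / (2 * Z ω (2 * K * r))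

/-- The averaged convolution `⟨J∗h⟩_μ(θ)` for binary disorder. -/
def Jconv (K ω₀ : ℝ) (h : ℝ → ℝ → ℝ) (θ : ℝ) : ℝ :=
  -(K / 2) * ((∫ φ in (0:ℝ)..(2 * Real.pi), Real.sin φ * h (θ - φ) (-ω₀)) +
    (∫ φ in (0:ℝ)..(2 * Real.pi), Real.sin φ * h (θ - φ) ω₀))

/-- The linearized evolution operator `L` around the stationary density `q`. -/
def Lop (K ω₀ r : ℝ) (h : ℝ → ℝ → ℝ) (θ ω : ℝ) : ℝ :=
  (1 / 2) * deriv (deriv (fun u => h u ω)) θ -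
    deriv (fun u => h u ω * (Jconv K ω₀ (q K r) u + ω) + q K r u ω * Jconv K ω₀ h u) θ

lemma Gcont (ω x : ℝ) : Continuous fun u => Real.exp (-(G u ω x)) := by
  unfold G; continuity

lemma Gneg (u ω x : ℝ) : G (-u) (-ω) x = G u ω x := by
  simp only [G, Real.cos_neg]; ring

lemma Gsub (u ω x : ℝ) : G (u - 2 * Real.pi) ω x = G u ω x - 4 * Real.pi * ω := by
  simp [G, Real.cos_sub_two_pi]; ring

lemma intA (θ ω x : ℝ) :
    (∫ u in (0:ℝ)..(-θ), Real.exp (-(G u (-ω) x))) =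
      -∫ u in (0:ℝ)..θ, Real.exp (-(G u ω x)) := by
  have h := intervalIntegral.integral_comp_neg (a := (0:ℝ)) (b := θ)
    (fun u => Real.exp (-(G u (-ω) x)))
  simp only [Gneg, neg_zero] at h
  rw [h]
  exact intervalIntegral.integral_symm _ _

lemma intShift (a b ω x : ℝ) :
    (∫ u in (a - 2 * Real.pi)..(b - 2 * Real.pi), Real.exp (-(G u ω x))) =
      Real.exp (4 * Real.pi * ω) * ∫ u in a..b, Real.exp (-(G u ω x)) := by
  rw [← intervalIntegral.integral_comp_sub_right _ (2 * Real.pi),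
    ← intervalIntegral.integral_const_mul]
  refine intervalIntegral.integral_congr fun u _ => ?_
  rw [Gsub, ← Real.exp_add]; ring_nf

lemma Ssym (θ ω x : ℝ) : S (-θ) (-ω) x = Real.exp (-(4 * Real.pi * ω)) * S θ ω x := by
  have h2 : (∫ u in (0:ℝ)..(2 * Real.pi), Real.exp (-(G u (-ω) x))) =
      Real.exp (4 * Real.pi * ω) * ∫ u in (0:ℝ)..(2 * Real.pi), Real.exp (-(G u ω x)) := by
    have := intA (-(2 * Real.pi)) ω x
    simp only [neg_neg] at this
    rw [this, ← intShift 0 (2 * Real.pi) ω x]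
    rw [intervalIntegral.integral_symm]
    norm_num
  unfold S
  rw [intA, h2, Gneg]
  have e1 : Real.exp (-(4 * Real.pi * ω)) * Real.exp (4 * Real.pi * ω) = 1 := by
    rw [← Real.exp_add]; simp
  set A := ∫ u in (0:ℝ)..θ, Real.exp (-(G u ω x))
  set I := ∫ u in (0:ℝ)..(2 * Real.pi), Real.exp (-(G u ω x))
  have : (4 : ℝ) * Real.pi * (-ω) = -(4 * Real.pi * ω) := by ring
  rw [this]
  linear_combination (Real.exp (G θ ω x) * A) * e1


lemma Sper (θ ω x : ℝ) : S (θ - 2 * Real.pi) ω x = S θ ω x := by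
  have hInt : ∀ a b : ℝ, IntervalIntegrable (fun u => Real.exp (-(G u ω x)))
      volume a b := fun a b => (Gcont ω x).intervalIntegrable a b
  have h1 := intShift 0 (2 * Real.pi) ω x
  have h2 := intShift 0 θ ω x
  norm_num at h1 h2
  have hsplit : (∫ u in (0:ℝ)..(θ - 2 * Real.pi), Real.exp (-(G u ω x))) =
      (∫ u in (0:ℝ)..(-(2 * Real.pi)), Real.exp (-(G u ω x))) +
      ∫ u in (-(2 * Real.pi))..(θ - 2 * Real.pi), Real.exp (-(G u ω x)) :=
    (intervalIntegral.integral_add_adjacent_intervals (hInt _ _) (hInt _ _)).symm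
  have h1' : (∫ u in (0:ℝ)..(-(2 * Real.pi)), Real.exp (-(G u ω x))) =
      -(Real.exp (4 * Real.pi * ω) * ∫ u in (0:ℝ)..(2 * Real.pi), Real.exp (-(G u ω x))) := by
    rw [intervalIntegral.integral_symm, h1]
  unfold S
  rw [hsplit, h1', h2, Gsub]
  have e1 : Real.exp (-(4 * Real.pi * ω)) * Real.exp (4 * Real.pi * ω) = 1 := by
    rw [← Real.exp_add]; simp
  rw [show G θ ω x - 4 * Real.pi * ω = G θ ω x + -(4 * Real.pi * ω) by ring, Real.exp_add]
  set A := ∫ u in (0:ℝ)..θ, Real.exp (-(G u ω x))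
  set I := ∫ u in (0:ℝ)..(2 * Real.pi), Real.exp (-(G u ω x))
  linear_combination (Real.exp (G θ ω x) *
    ((1 - Real.exp (4 * Real.pi * ω)) * A + Real.exp (4 * Real.pi * ω) * I)) * e1

lemma Zsym (ω x : ℝ) : Z (-ω) x = Real.exp (-(4 * Real.pi * ω)) * Z ω x := by
  have hpt : ∀ θ : ℝ, S θ (-ω) x = Real.exp (-(4 * Real.pi * ω)) * S (-θ) ω x := by
    intro θ; have := Ssym (-θ) ω x; simpa using this
  have h1 := intervalIntegral.integral_comp_neg (a := (0:ℝ)) (b := 2 * Real.pi)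
    (fun θ => S θ ω x)
  have h2 := intervalIntegral.integral_comp_sub_right (a := (0:ℝ)) (b := 2 * Real.pi)
    (fun θ => S θ ω x) (2 * Real.pi)
  simp only [neg_zero] at h1
  rw [show (0:ℝ) - 2 * Real.pi = -(2 * Real.pi) by ring,
    show 2 * Real.pi - 2 * Real.pi = (0:ℝ) by ring] at h2
  have key : (∫ θ in (0:ℝ)..(2 * Real.pi), S (-θ) ω x) = Z ω x := by
    rw [h1, ← h2]
    unfold Z
    simp_rw [Sper]
  unfold Z
  simp_rw [hpt]
  rw [intervalIntegral.integral_const_mul, key]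
  rfl

lemma qsym' (K r θ ω : ℝ) : S (-θ) (-ω) (2*K*r) / Z (-ω) (2*K*r) = S θ ω (2*K*r) / Z ω (2*K*r) := by
  rw [Ssym, Zsym, mul_div_mul_left _ _ (Real.exp_ne_zero _)]

/-- Symmetry relations for `S` and `Z`, even symmetry of the stationary density `q`, and
oddness of its `θ`-derivative. -/
theorem stmt1 (K ω₀ r : ℝ) (hK : 0 < K) (hω₀ : 0 < ω₀) (hr : 0 < r) :
    (∀ θ ω x : ℝ, S (-θ) (-ω) x = Real.exp (-(4 * Real.pi * ω)) * S θ ω x) ∧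
      (∀ ω x : ℝ, Z (-ω) x = Real.exp (-(4 * Real.pi * ω)) * Z ω x) ∧
      (∀ θ : ℝ, ∀ ω ∈ ({-ω₀, ω₀} : Set ℝ), q K r (-θ) (-ω) = q K r θ ω) ∧
      ∀ θ : ℝ, ∀ ω ∈ ({-ω₀, ω₀} : Set ℝ),
        deriv (fun u => q K r u (-ω)) (-θ) = -deriv (fun u => q K r u ω) θ := by
  refine ⟨Ssym, Zsym, ?_, ?_⟩
  · intro θ ω _
    exact qsym' K r θ ω
  · intro θ ω _
    have hfun : (fun u => q K r u (-ω)) = fun u => q K r (-u) ω := funext fun u => by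
      have h := qsym' K r (-u) ω
      simpa [q] using h
    rw [hfun]
    have h2 := deriv_comp_neg (f := fun v => q K r v ω) (x := -θ)
    rwa [neg_neg] at h2
end
end

section
/- For each ω ∈ {−ω₀, ω₀} (in particular ω ≠ 0), there exists a unique 2π-periodic C¹ function f : ℝ → ℝ satisfying the first-order ODE with periodic boundary condition (1/4)·f'(θ) + κ(ω)·f(θ)/q(θ, ω) = 1/q(θ, ω) for all θ ∈ ℝ, where κ(ω) = (1 − exp(4πω))/(2·Z(ω, 2Kr)). -/
noncomputable section

open MeasureTheory

lemma contExpG (ω x : ℝ) : Continuous fun u : ℝ => Real.exp (-(G u ω x)) := by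
  unfold G; fun_prop

lemma hasDerivA (ω x θ : ℝ) :
    HasDerivAt (fun t => ∫ u in (0:ℝ)..t, Real.exp (-(G u ω x))) (Real.exp (-(G θ ω x))) θ :=
  intervalIntegral.integral_hasDerivAt_right ((contExpG ω x).intervalIntegrable _ _)
    ((contExpG ω x).stronglyMeasurable.stronglyMeasurableAtFilter) (contExpG ω x).continuousAt

lemma contA (ω x : ℝ) : Continuous fun t : ℝ => ∫ u in (0:ℝ)..t, Real.exp (-(G u ω x)) :=
  continuous_iff_continuousAt.2 fun θ => (hasDerivA ω x θ).continuousAt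

lemma contS (ω x : ℝ) : Continuous fun θ => S θ ω x := by
  unfold S
  apply Continuous.mul
  · unfold G; fun_prop
  · exact (continuous_const.mul (contA ω x)).add continuous_const

lemma S_periodic (ω x : ℝ) : Function.Periodic (fun θ => S θ ω x) (2 * Real.pi) := by
  intro θ
  simp only [S]
  have hG : ∀ u, G (u + 2 * Real.pi) ω x = G u ω x + 4 * Real.pi * ω := by
    intro u; simp [G, Real.cos_add_two_pi]; ring
  have hi : ∀ a b : ℝ, IntervalIntegrable (fun u => Real.exp (-(G u ω x))) volume a b :=
    fun a b => (contExpG ω x).intervalIntegrable a b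
  have hsplit : (∫ u in (0:ℝ)..(θ + 2 * Real.pi), Real.exp (-(G u ω x)))
      = (∫ u in (0:ℝ)..(2 * Real.pi), Real.exp (-(G u ω x)))
        + (∫ u in (0:ℝ)..θ, Real.exp (-(G u ω x))) * Real.exp (-(4 * Real.pi * ω)) := by
    rw [← intervalIntegral.integral_add_adjacent_intervals (hi 0 (2 * Real.pi))
      (hi (2 * Real.pi) (θ + 2 * Real.pi))]
    congr 1
    have h2 : (∫ u in (2 * Real.pi)..(θ + 2 * Real.pi), Real.exp (-(G u ω x)))
        = ∫ u in (0:ℝ)..θ, Real.exp (-(G (u + 2 * Real.pi) ω x)) := by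
      rw [intervalIntegral.integral_comp_add_right (fun u => Real.exp (-(G u ω x)))]
      norm_num
    rw [h2]
    simp only [hG, neg_add, Real.exp_add]
    rw [intervalIntegral.integral_mul_const]
  rw [hG, hsplit, Real.exp_add, Real.exp_neg]
  have hE := Real.exp_ne_zero (4 * Real.pi * ω)
  field_simp
  ring

lemma S_pos (ω x θ : ℝ) : 0 < S θ ω x := by
  obtain ⟨y, hy, hxy⟩ := (S_periodic ω x).exists_mem_Ico₀ (by positivity) θ
  show 0 < S θ ω x
  rw [hxy]
  simp only [S]
  have hi : ∀ a b : ℝ, IntervalIntegrable (fun u => Real.exp (-(G u ω x))) volume a b :=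
    fun a b => (contExpG ω x).intervalIntegrable a b
  set A : ℝ := ∫ u in (0:ℝ)..y, Real.exp (-(G u ω x)) with hA
  set D : ℝ := ∫ u in y..(2 * Real.pi), Real.exp (-(G u ω x)) with hD
  have hC : (∫ u in (0:ℝ)..(2 * Real.pi), Real.exp (-(G u ω x))) = A + D :=
    (intervalIntegral.integral_add_adjacent_intervals (hi 0 y) (hi y (2 * Real.pi))).symm
  have hApos : 0 ≤ A := intervalIntegral.integral_nonneg hy.1 (fun u _ => (Real.exp_pos _).le)
  have hDpos : 0 ≤ D := intervalIntegral.integral_nonneg hy.2.le (fun u _ => (Real.exp_pos _).le)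
  have hCpos : 0 < A + D := by
    rw [← hC]
    exact intervalIntegral.intervalIntegral_pos_of_pos (hi 0 (2 * Real.pi))
      (fun u => Real.exp_pos _) (by positivity)
  rw [hC]
  have hE : 0 < Real.exp (4 * Real.pi * ω) := Real.exp_pos _
  have hbr : (1 - Real.exp (4 * Real.pi * ω)) * A + Real.exp (4 * Real.pi * ω) * (A + D)
      = A + Real.exp (4 * Real.pi * ω) * D := by ring
  rw [hbr]
  rcases eq_or_lt_of_le hApos with h | h
  · have hD' : 0 < D := by linarith [hCpos, h]
    positivity
  · positivity

lemma Z_pos (ω x : ℝ) : 0 < Z ω x :=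
  intervalIntegral.intervalIntegral_pos_of_pos ((contS ω x).intervalIntegrable _ _)
    (fun θ => S_pos ω x θ) (by positivity)

/-- For each `ω ∈ {−ω₀, ω₀}`, the first-order periodic ODE has a unique `2π`-periodic
`C¹` solution. -/
theorem stmt7 (K ω₀ r : ℝ) (hK : 0 < K) (hω₀ : 0 < ω₀) (hr : 0 < r)
    (hfix : r = psiMu ω₀ (2 * K * r)) :
    ∀ ω ∈ ({-ω₀, ω₀} : Set ℝ),
      ∃! f : ℝ → ℝ,
        Function.Periodic f (2 * Real.pi) ∧ ContDiff ℝ 1 f ∧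
          ∀ θ : ℝ,
            (1 / 4) * deriv f θ + kap K r ω * f θ / q K r θ ω = 1 / q K r θ ω := by
  intro ω hω
  have hπ := Real.pi_pos
  have hωne : ω ≠ 0 := by
    rcases hω with h | h
    · rw [h]; intro hc; rw [neg_eq_zero] at hc; exact hω₀.ne' hc
    · simp only [Set.mem_singleton_iff] at h; rw [h]; exact hω₀.ne'
  set x := 2 * K * r with hx
  have hZ : 0 < Z ω x := Z_pos ω x
  have hκ : kap K r ω ≠ 0 := by
    unfold kap
    rw [← hx]
    apply div_ne_zero
    · intro h
      have hE1 : Real.exp (4 * Real.pi * ω) = 1 := by linarith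
      rw [Real.exp_eq_one_iff] at hE1
      apply hωne
      have h4π : (4 : ℝ) * Real.pi ≠ 0 := by positivity
      exact (mul_eq_zero.1 hE1).resolve_left h4π
    · positivity
  set c : ℝ := 1 / kap K r ω with hc
  have hqpos : ∀ θ, 0 < q K r θ ω := fun θ => div_pos (S_pos ω x θ) hZ
  refine ⟨fun _ => c, ⟨fun θ => rfl, contDiff_const, ?_⟩, ?_⟩
  · intro θ
    simp only [deriv_const', mul_zero, zero_add]
    rw [hc, mul_one_div, div_self hκ]
  · rintro g ⟨hgP, hgC1, hgODE⟩
    set Q : ℝ → ℝ := fun t => q K r t ω with hQ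
    have hQcont : Continuous Q := by
      have : Q = fun t => S t ω x / Z ω x := by funext t; simp [hQ, q, hx]
      rw [this]
      exact (contS ω x).div_const _
    have hQne : ∀ t, Q t ≠ 0 := fun t => (hqpos t).ne'
    have hdiff : Differentiable ℝ g := hgC1.differentiable one_ne_zero
    have hdg : ∀ t, deriv g t = -(4 * kap K r ω) * (g t - c) / Q t := by
      intro t
      have e := hgODE t
      have hq : q K r t ω ≠ 0 := (hqpos t).ne'
      show deriv g t = -(4 * kap K r ω) * (g t - c) / q K r t ω
      rw [hc]
      field_simp [hq] at e
      field_simp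
      linear_combination e
    set Φ : ℝ → ℝ := fun t => ∫ u in (0:ℝ)..t, (Q u)⁻¹ with hΦ
    have hQicont : Continuous fun u => (Q u)⁻¹ := hQcont.inv₀ hQne
    have hΦd : ∀ t, HasDerivAt Φ (Q t)⁻¹ t := fun t =>
      intervalIntegral.integral_hasDerivAt_right (hQicont.intervalIntegrable _ _)
        hQicont.stronglyMeasurable.stronglyMeasurableAtFilter hQicont.continuousAt
    set F : ℝ → ℝ := fun t => (g t - c) * Real.exp (4 * kap K r ω * Φ t) with hF
    have hFd : ∀ t, HasDerivAt F 0 t := by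
      intro t
      have h1 : HasDerivAt (fun s => g s - c) (deriv g t) t :=
        ((hdiff t).hasDerivAt).sub_const _
      have h2 : HasDerivAt (fun s => Real.exp (4 * kap K r ω * Φ s))
          (Real.exp (4 * kap K r ω * Φ t) * (4 * kap K r ω * (Q t)⁻¹)) t := by
        exact ((hΦd t).const_mul (4 * kap K r ω)).exp
      have := h1.mul h2
      refine HasDerivAt.congr_deriv this ?_
      rw [hdg t]
      have hq := hQne t
      field_simp
      ring
    have hFconst : ∀ t, F t = F 0 := fun t =>
      is_const_of_deriv_eq_zero (fun s => (hFd s).differentiableAt)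
        (fun s => (hFd s).deriv) t 0
    have hF0 : F 0 = g 0 - c := by
      simp [hF, hΦ, intervalIntegral.integral_same]
    have hΦ2π : 0 < Φ (2 * Real.pi) :=
      intervalIntegral.intervalIntegral_pos_of_pos (hQicont.intervalIntegrable _ _)
        (fun t => inv_pos.2 (hqpos t)) (by positivity)
    have hg2π : g (2 * Real.pi) = g 0 := by
      have := hgP 0
      rwa [zero_add] at this
    have h0 : g 0 - c = 0 := by
      have h2 := hFconst (2 * Real.pi)
      rw [hF0] at h2
      simp only [hF, hg2π] at h2
      by_contra hne
      have hexp : Real.exp (4 * kap K r ω * Φ (2 * Real.pi)) = 1 := by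
        have h2' : (g 0 - c) * Real.exp (4 * kap K r ω * Φ (2 * Real.pi)) = (g 0 - c) * 1 := by
          rw [mul_one]; exact h2
        exact mul_left_cancel₀ hne h2'
      rw [Real.exp_eq_one_iff] at hexp
      rcases mul_eq_zero.1 hexp with h | h
      · rcases mul_eq_zero.1 h with h' | h'
        · norm_num at h'
        · exact hκ h'
      · exact hΦ2π.ne' h
    funext θ
    have hFθ := hFconst θ
    rw [hF0, h0] at hFθ
    simp only [hF] at hFθ
    rcases mul_eq_zero.1 hFθ with h | h
    · have : g θ = c := by linarith
      simpa using this
    · exact absurd h (Real.exp_ne_zero _)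
end
end
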